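/- arXiv:2212.14512 — 2 statements merged into one kernel-verified Lean document; each statement's English description precedes it below -/
import Mathlib

section
/- Fix n ≥ 0 and assume V_n(t) and V_{n+1}(t) are invertible for all t, with a_n = −V_{n+1} V_n^{-1}. Then for all t ∈ ℝ and all x ∈ ℝ, ∂_t ( P_{n+1}(t,x) + a_n(t) P_n(t,x) ) = ( ∂_t ( ξ_{n+1,n} + a_n ) )(t) · P_n(t,x), i.e. the t-derivative of each coefficient of the polynomial P_{n+1} + a_n P_n equals the corresponding coefficient of (∂_t(ξ_{n+1,n} + a_n)) P_n. -/
open Matrix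

attribute [local instance] Matrix.normedAddCommGroup Matrix.normedSpace

noncomputable section
set_option linter.unusedSectionVars false
set_option linter.unusedVariables false
set_option maxHeartbeats 1000000

/-- `M_p`: real `p × p` matrices. -/
abbrev Mp (p : ℕ) := Matrix (Fin p) (Fin p) ℝ

/-- The block moment matrix `M_n(t) = (m_{i,j}(t))_{0 ≤ i,j ≤ n−1}`, an `np × np` real matrix. -/
def blockM {p : ℕ} (m : ℕ → ℕ → ℝ → Mp p) (n : ℕ) (t : ℝ) :
    Matrix (Fin n × Fin p) (Fin n × Fin p) ℝ :=
  Matrix.of fun a b => m a.1 b.1 t a.2 b.2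

/-- The row of moments `(m_{n,0}(t), …, m_{n,n−1}(t))`, a `p × np` matrix. -/
def rowm {p : ℕ} (m : ℕ → ℕ → ℝ → Mp p) (n : ℕ) (t : ℝ) : Matrix (Fin p) (Fin n × Fin p) ℝ :=
  Matrix.of fun a b => m n b.1 t a b.2

/-- `ξ_{n,i}(t)`, defined by `(ξ_{n,0},…,ξ_{n,n−1}) = −(m_{n,0},…,m_{n,n−1}) M_n⁻¹` pointwise in `t`. -/
def xiD {p : ℕ} (m : ℕ → ℕ → ℝ → Mp p) (n : ℕ) (i : Fin n) (t : ℝ) : Mp p :=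
  Matrix.of fun a b => ((-(rowm m n t)) * (blockM m n t)⁻¹) a (i, b)

/-- `H_n(t) = m_{n,n}(t) + Σ_{i=0}^{n−1} ξ_{n,i}(t) m_{i,n}(t)`. -/
def HmatD {p : ℕ} (m : ℕ → ℕ → ℝ → Mp p) (n : ℕ) (t : ℝ) : Mp p :=
  m n n t + ∑ i : Fin n, xiD m n i t * m i n t

/-- `V_n(t) = φ_n(t) + Σ_{i=0}^{n−1} ξ_{n,i}(t) φ_i(t)`. -/
def VD {p : ℕ} (m : ℕ → ℕ → ℝ → Mp p) (φ : ℕ → ℝ → Mp p) (n : ℕ) (t : ℝ) : Mp p :=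
  φ n t + ∑ i : Fin n, xiD m n i t * φ i t

/-- `a_n(t) = −V_{n+1}(t) V_n(t)⁻¹`. -/
def aD {p : ℕ} (m : ℕ → ℕ → ℝ → Mp p) (φ : ℕ → ℝ → Mp p) (n : ℕ) (t : ℝ) : Mp p :=
  -(VD m φ (n + 1) t * (VD m φ n t)⁻¹)

/-- `P_n(t,x) = x^n I + Σ_{i=0}^{n−1} ξ_{n,i}(t) x^i`. -/
def Ppol {p : ℕ} (m : ℕ → ℕ → ℝ → Mp p) (n : ℕ) (t : ℝ) (x : ℝ) : Mp p :=
  x ^ n • (1 : Mp p) + ∑ i : Fin n, x ^ (i : ℕ) • xiD m n i t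



section MatCalc

variable {ι κ μ : Type*} [Fintype ι] [Fintype κ] [Fintype μ]

theorem hasDerivAt_matrix {f : ℝ → Matrix ι κ ℝ} {A : Matrix ι κ ℝ} {t : ℝ} :
    HasDerivAt f A t ↔ ∀ i j, HasDerivAt (fun s => f s i j) (A i j) t := by
  constructor
  · intro h i j
    exact (hasDerivAt_pi.1 ((hasDerivAt_pi (φ := f)).1 h i)) j
  · intro h
    exact hasDerivAt_pi.2 fun i => hasDerivAt_pi.2 fun j => h i j

/-- Entrywise differentiability of a matrix-valued function, everywhere. -/
def MDiff (f : ℝ → Matrix ι κ ℝ) : Prop :=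
  ∀ t i j, DifferentiableAt ℝ (fun s => f s i j) t

/-- Entrywise derivative matrix. -/
def mder (f : ℝ → Matrix ι κ ℝ) (t : ℝ) : Matrix ι κ ℝ :=
  Matrix.of fun i j => deriv (fun s => f s i j) t

theorem MDiff.hasDerivAt {f : ℝ → Matrix ι κ ℝ} (hf : MDiff f) (t : ℝ) :
    HasDerivAt f (mder f t) t :=
  hasDerivAt_matrix.2 fun i j => (hf t i j).hasDerivAt

theorem HasDerivAt.matrix_mul {f : ℝ → Matrix ι κ ℝ} {g : ℝ → Matrix κ μ ℝ}
    {A : Matrix ι κ ℝ} {B : Matrix κ μ ℝ} {t : ℝ}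
    (hf : HasDerivAt f A t) (hg : HasDerivAt g B t) :
    HasDerivAt (fun s => f s * g s) (A * g t + f t * B) t := by
  rw [hasDerivAt_matrix] at hf hg ⊢
  intro i j
  have : HasDerivAt (fun s => ∑ k, f s i k * g s k j)
      (∑ k, (A i k * g t k j + f t i k * B k j)) t :=
    HasDerivAt.fun_sum fun k _ => ((hf i k).mul (hg k j))
  simpa [Matrix.mul_apply, Matrix.add_apply, Finset.sum_add_distrib] using this

theorem MDiff.mul {f : ℝ → Matrix ι κ ℝ} {g : ℝ → Matrix κ μ ℝ}
    (hf : MDiff f) (hg : MDiff g) : MDiff (fun s => f s * g s) := fun t i j => by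
  have := ((hf.hasDerivAt t).matrix_mul (hg.hasDerivAt t))
  exact (hasDerivAt_matrix.1 this i j).differentiableAt

theorem mder_mul {f : ℝ → Matrix ι κ ℝ} {g : ℝ → Matrix κ μ ℝ}
    (hf : MDiff f) (hg : MDiff g) (t : ℝ) :
    mder (fun s => f s * g s) t = mder f t * g t + f t * mder g t :=
  (((hf.mul hg).hasDerivAt t).unique ((hf.hasDerivAt t).matrix_mul (hg.hasDerivAt t)))

theorem MDiff.add {f g : ℝ → Matrix ι κ ℝ} (hf : MDiff f) (hg : MDiff g) :
    MDiff (fun s => f s + g s) := fun t i j => by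
  simpa [Matrix.add_apply] using ((hf t i j).fun_add (hg t i j))

theorem MDiff.sum {σ : Type*} (s : Finset σ) {F : σ → ℝ → Matrix ι κ ℝ}
    (hF : ∀ a ∈ s, MDiff (F a)) : MDiff (fun x => ∑ a ∈ s, F a x) := fun t i j => by
  have : DifferentiableAt ℝ (fun x => ∑ a ∈ s, F a x i j) t :=
    DifferentiableAt.fun_sum fun a ha => hF a ha t i j
  simpa only [Matrix.sum_apply] using this

theorem MDiff.transpose {f : ℝ → Matrix ι κ ℝ} (hf : MDiff f) :
    MDiff (fun s => (f s)ᵀ) := fun t i j => hf t j i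

theorem MDiff.neg {f : ℝ → Matrix ι κ ℝ} (hf : MDiff f) :
    MDiff (fun s => -f s) := fun t i j => by
  simpa using (hf t i j).neg

theorem differentiableAt_matrix_det [DecidableEq ι] {f : ℝ → Matrix ι ι ℝ} {t : ℝ}
    (hf : ∀ i j, DifferentiableAt ℝ (fun s => f s i j) t) :
    DifferentiableAt ℝ (fun s => (f s).det) t := by
  simp only [Matrix.det_apply']
  exact DifferentiableAt.fun_sum fun σ _ =>
    ((DifferentiableAt.fun_finsetProd (fun i _ => hf (σ i) i))).const_mul _

theorem MDiff.matrix_inv [DecidableEq ι] {f : ℝ → Matrix ι ι ℝ}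
    (hf : MDiff f) (hu : ∀ s, IsUnit (f s)) : MDiff (fun s => (f s)⁻¹) := by
  intro t i j
  have hdet : ∀ s, (f s).det ≠ 0 := fun s => by
    have := (Matrix.isUnit_iff_isUnit_det _).1 (hu s)
    exact IsUnit.ne_zero this
  have hadj : DifferentiableAt ℝ (fun s => (f s).adjugate i j) t := by
    simp only [Matrix.adjugate_apply]
    apply differentiableAt_matrix_det
    intro a b
    rcases eq_or_ne a j with rfl | hne
    · simp only [Matrix.updateRow_self]
      exact differentiableAt_const _
    · simp only [Matrix.updateRow_ne hne]
      exact hf t a b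
  have : DifferentiableAt ℝ (fun s => ((f s).det)⁻¹ * (f s).adjugate i j) t :=
    ((differentiableAt_matrix_det (hf t)).inv (hdet t)).mul hadj
  refine this.congr_of_eventuallyEq ?_
  filter_upwards with s
  rw [Matrix.inv_def, Ring.inverse_eq_inv]
  simp [Matrix.smul_apply]

end MatCalc

section Main

variable {p : ℕ} {m : ℕ → ℕ → ℝ → Mp p} {φ : ℕ → ℝ → Mp p}

theorem mdiff_m (hderiv : ∀ i j t, HasDerivAt (m i j) (m (i + 1) j t + m i (j + 1) t) t)
    (i j : ℕ) : MDiff (m i j) := fun t a b =>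
  ((hasDerivAt_matrix.1 (hderiv i j t)) a b).differentiableAt

theorem mdiff_blockM (hderiv : ∀ i j t, HasDerivAt (m i j) (m (i + 1) j t + m i (j + 1) t) t)
    (N : ℕ) : MDiff (fun s => blockM m N s) := fun t a b =>
  mdiff_m hderiv a.1 b.1 t a.2 b.2

theorem mdiff_negrowm (hderiv : ∀ i j t, HasDerivAt (m i j) (m (i + 1) j t + m i (j + 1) t) t)
    (N : ℕ) : MDiff (fun s => -(rowm m N s)) := fun t a b => by
  have : DifferentiableAt ℝ (fun s => m N b.1 s a b.2) t := mdiff_m hderiv N b.1 t a b.2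
  simpa [rowm] using this.neg

theorem mdiff_xi (hderiv : ∀ i j t, HasDerivAt (m i j) (m (i + 1) j t + m i (j + 1) t) t)
    (hM : ∀ n t, IsUnit (blockM m n t)) (N : ℕ) (i : Fin N) : MDiff (xiD m N i) :=
  fun t a b =>
  ((mdiff_negrowm hderiv N).mul
    ((mdiff_blockM hderiv N).matrix_inv (fun s => hM N s))) t a (i, b)

theorem orth (hM : ∀ n t, IsUnit (blockM m n t)) (N : ℕ) (t : ℝ) (j : Fin N) :
    (∑ i : Fin N, xiD m N i t * m i j t) + m N j t = 0 := by
  have hd : IsUnit (blockM m N t).det := (Matrix.isUnit_iff_isUnit_det _).1 (hM N t)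
  have h : -(rowm m N t) * (blockM m N t)⁻¹ * blockM m N t = -(rowm m N t) :=
    Matrix.nonsing_inv_mul_cancel_right _ _ hd
  ext a b
  have h2 := congrFun (congrFun h a) (j, b)
  simp only [Matrix.mul_apply, Fintype.sum_prod_type, blockM, rowm, Matrix.neg_apply,
    Matrix.of_apply] at h2
  simp only [Matrix.add_apply, Matrix.sum_apply, Matrix.mul_apply, Matrix.zero_apply,
    xiD, Matrix.of_apply, blockM, rowm, Matrix.neg_apply, Fintype.sum_prod_type]
  linear_combination h2

theorem xi_deriv_rel (hderiv : ∀ i j t, HasDerivAt (m i j) (m (i + 1) j t + m i (j + 1) t) t)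
    (hphi : ∀ i j t, m (i + 1) j t + m i (j + 1) t = φ i t * φ j t)
    (hM : ∀ n t, IsUnit (blockM m n t)) (N : ℕ) (t : ℝ) (j : Fin N) :
    ∑ i : Fin N, mder (xiD m N i) t * m i j t = -(VD m φ N t * φ j t) := by
  have hD : HasDerivAt (fun s => (∑ i : Fin N, xiD m N i s * m i j s) + m N j s)
      ((∑ i : Fin N, (mder (xiD m N i) t * m i j t
          + xiD m N i t * (m (i + 1) j t + m i (j + 1) t)))
        + (m (N + 1) j t + m N (j + 1) t)) t := by
    apply HasDerivAt.add
    · exact HasDerivAt.fun_sum fun i _ =>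
        ((mdiff_xi hderiv hM N i).hasDerivAt t).matrix_mul (hderiv i j t)
    · exact hderiv N j t
  have h0 : HasDerivAt (fun s => (∑ i : Fin N, xiD m N i s * m i j s) + m N j s)
      (0 : Mp p) t := by
    refine (hasDerivAt_const t (0 : Mp p)).congr_of_eventuallyEq ?_
    filter_upwards with s
    exact orth hM N s j
  have h1 := hD.unique h0
  simp only [hphi, Finset.sum_add_distrib] at h1
  have hVφ : VD m φ N t * φ j t
      = φ N t * φ j t + ∑ i : Fin N, xiD m N i t * (φ i t * φ j t) := by
    simp [VD, add_mul, Finset.sum_mul, mul_assoc, add_comm]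
  rw [hVφ]
  have := eq_neg_of_add_eq_zero_left (by rw [← add_assoc]; exact h1 :
    (∑ i : Fin N, mder (xiD m N i) t * m i j t)
      + ((∑ i : Fin N, xiD m N i t * (φ i t * φ j t)) + φ N t * φ j t) = 0)
  rw [this, add_comm]

theorem row_cancel (hM : ∀ n t, IsUnit (blockM m n t)) (N : ℕ) (t : ℝ) (E : Fin N → Mp p)
    (hE : ∀ j : Fin N, ∑ i : Fin N, E i * m i j t = 0) (i : Fin N) : E i = 0 := by
  have hd : IsUnit (blockM m N t).det := (Matrix.isUnit_iff_isUnit_det _).1 (hM N t)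
  set F : Matrix (Fin p) (Fin N × Fin p) ℝ := Matrix.of fun a b => E b.1 a b.2 with hFdef
  have hFM : F * blockM m N t = 0 := by
    ext a c
    obtain ⟨j, c⟩ := c
    have h2 := congrFun (congrFun (hE j) a) c
    simp only [Matrix.sum_apply, Matrix.mul_apply, Matrix.zero_apply] at h2
    simp only [Matrix.mul_apply, Fintype.sum_prod_type, Matrix.zero_apply, hFdef,
      Matrix.of_apply, blockM]
    linear_combination h2
  have hF : F = 0 := by
    calc F = F * blockM m N t * (blockM m N t)⁻¹ :=
          (Matrix.mul_nonsing_inv_cancel_right _ _ hd).symm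
    _ = 0 := by rw [hFM, Matrix.zero_mul]
  ext a b
  have := congrFun (congrFun hF a) (i, b)
  simpa [hFdef] using this

end Main

section Main2

variable {p : ℕ} {m : ℕ → ℕ → ℝ → Mp p} {φ : ℕ → ℝ → Mp p} {n : ℕ}

theorem sum_mulVec' {ι κ σ : Type*} [Fintype ι] [Fintype κ] (s : Finset σ)
    (A : σ → Matrix ι κ ℝ) (v : κ → ℝ) :
    (∑ a ∈ s, A a) *ᵥ v = ∑ a ∈ s, A a *ᵥ v := by
  ext i
  simp only [Matrix.mulVec, dotProduct, Finset.sum_apply, Matrix.sum_apply,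
    Finset.sum_mul]
  rw [Finset.sum_comm]

theorem dotProduct_sum' {κ σ : Type*} [Fintype κ] (s : Finset σ)
    (v : κ → ℝ) (w : σ → κ → ℝ) :
    v ⬝ᵥ (∑ a ∈ s, w a) = ∑ a ∈ s, v ⬝ᵥ w a := by
  simp only [dotProduct, Finset.sum_apply, Finset.mul_sum]
  rw [Finset.sum_comm]

theorem mulVec_eq_zero_of_unit {A : Mp p} (hA : IsUnit A) {v : Fin p → ℝ}
    (h : A *ᵥ v = 0) : v = 0 := by
  have hd := (Matrix.isUnit_iff_isUnit_det _).1 hA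
  calc v = (A⁻¹ * A) *ᵥ v := by rw [Matrix.nonsing_inv_mul _ hd, Matrix.one_mulVec]
  _ = A⁻¹ *ᵥ (A *ᵥ v) := by rw [Matrix.mulVec_mulVec]
  _ = 0 := by rw [h, Matrix.mulVec_zero]

theorem phi_ker (hV1 : ∀ t, IsUnit (VD m φ n t)) (t : ℝ) (z : Fin p → ℝ)
    (hz : ∀ j : Fin (n + 1), (φ (j : ℕ) t) *ᵥ z = 0) : z = 0 := by
  apply mulVec_eq_zero_of_unit (hV1 t)
  rw [VD, Matrix.add_mulVec, sum_mulVec']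
  have h1 : (φ n t) *ᵥ z = 0 := by
    have := hz (Fin.last n)
    simpa using this
  have h2 : ∀ i : Fin n, (xiD m n i t * φ (i : ℕ) t) *ᵥ z = 0 := fun i => by
    rw [← Matrix.mulVec_mulVec]
    have := hz i.castSucc
    simp only [Fin.coe_castSucc] at this
    rw [this, Matrix.mulVec_zero]
  simp [h1, h2]

theorem phiT_ker (hsym : ∀ i j t, m i j t = (m j i t)ᵀ)
    (hphi : ∀ i j t, m (i + 1) j t + m i (j + 1) t = φ i t * φ j t)
    (hV1 : ∀ t, IsUnit (VD m φ n t)) (t : ℝ) (w : Fin p → ℝ)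
    (hw : ∀ j : Fin (n + 1), (φ (j : ℕ) t)ᵀ *ᵥ w = 0) : w = 0 := by
  have hkey : ∀ i j : ℕ, φ i t * φ j t = (φ i t)ᵀ * (φ j t)ᵀ := by
    intro i j
    have e1 : φ i t * φ j t = (φ j t * φ i t)ᵀ := by
      rw [← hphi, ← hphi, hsym (i + 1) j t, hsym i (j + 1) t, ← Matrix.transpose_add]
      rw [add_comm]
    rw [e1, Matrix.transpose_mul]
  have h1 : ∀ j : Fin (n + 1), (φ (j : ℕ) t) *ᵥ w = 0 := by
    intro j
    apply phi_ker hV1 t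
    intro i
    rw [Matrix.mulVec_mulVec, hkey, ← Matrix.mulVec_mulVec, hw j, Matrix.mulVec_zero]
  exact phi_ker hV1 t w h1

theorem mdiff_aD (hsym : ∀ i j t, m i j t = (m j i t)ᵀ)
    (hderiv : ∀ i j t, HasDerivAt (m i j) (m (i + 1) j t + m i (j + 1) t) t)
    (hphi : ∀ i j t, m (i + 1) j t + m i (j + 1) t = φ i t * φ j t)
    (hM : ∀ n t, IsUnit (blockM m n t))
    (hV1 : ∀ t, IsUnit (VD m φ n t)) : MDiff (aD m φ n) := by
  classical
  set G : ℕ → ℕ → ℝ → Mp p := fun N j t =>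
    (m (N + 1) j t + m N (j + 1) t)
      + ∑ i : Fin N, xiD m N i t * (m ((i : ℕ) + 1) j t + m (i : ℕ) (j + 1) t) with hGdef
  have hGV : ∀ N j t, G N j t = VD m φ N t * φ j t := by
    intro N j t
    simp only [hGdef, VD, hphi, add_mul, Finset.sum_mul, mul_assoc]
  have hGd : ∀ N j, MDiff (fun t => G N j t) := by
    intro N j
    apply MDiff.add
    · exact (mdiff_m hderiv _ _).add (mdiff_m hderiv _ _)
    · exact MDiff.sum _ fun i _ =>
        (mdiff_xi hderiv hM N i).mul ((mdiff_m hderiv _ _).add (mdiff_m hderiv _ _))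
  set S : ℝ → Mp p := fun t => ∑ j : Fin (n + 1), G n (j : ℕ) t * (G n (j : ℕ) t)ᵀ with hSdef
  set T : ℝ → Mp p := fun t => ∑ j : Fin (n + 1), G (n + 1) (j : ℕ) t * (G n (j : ℕ) t)ᵀ
    with hTdef
  have hSd : MDiff S := MDiff.sum _ fun j _ => (hGd n j).mul (hGd n j).transpose
  have hTd : MDiff T := MDiff.sum _ fun j _ => (hGd (n + 1) j).mul (hGd n j).transpose
  have hSu : ∀ t, IsUnit (S t) := by
    intro t
    rw [Matrix.isUnit_iff_isUnit_det, isUnit_iff_ne_zero]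
    intro h0
    obtain ⟨v, hv0, hv⟩ := Matrix.exists_mulVec_eq_zero_iff.2 h0
    have hq : ∀ j : Fin (n + 1), (VD m φ n t * φ (j : ℕ) t)ᵀ *ᵥ v = 0 := by
      have e0 : (0 : ℝ) = ∑ j : Fin (n + 1),
          ((VD m φ n t * φ (j : ℕ) t)ᵀ *ᵥ v) ⬝ᵥ ((VD m φ n t * φ (j : ℕ) t)ᵀ *ᵥ v) := by
        calc (0 : ℝ) = v ⬝ᵥ (S t *ᵥ v) := by rw [hv, dotProduct_zero]
        _ = ∑ j : Fin (n + 1), v ⬝ᵥ (((VD m φ n t * φ (j : ℕ) t)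
              * (VD m φ n t * φ (j : ℕ) t)ᵀ) *ᵥ v) := by
            rw [hSdef]
            simp only [hGV]
            rw [sum_mulVec', dotProduct_sum']
        _ = _ := by
            apply Finset.sum_congr rfl
            intro j _
            rw [← Matrix.mulVec_mulVec, Matrix.dotProduct_mulVec, ← Matrix.mulVec_transpose]
      intro j
      have hnn : ∀ j ∈ (Finset.univ : Finset (Fin (n + 1))), (0:ℝ) ≤
          ((VD m φ n t * φ (j : ℕ) t)ᵀ *ᵥ v) ⬝ᵥ ((VD m φ n t * φ (j : ℕ) t)ᵀ *ᵥ v) :=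
        fun j _ => Finset.sum_nonneg fun i _ => mul_self_nonneg _
      have := (Finset.sum_eq_zero_iff_of_nonneg hnn).1 e0.symm j (Finset.mem_univ j)
      exact dotProduct_self_eq_zero.1 this
    have hw : ∀ j : Fin (n + 1), (φ (j : ℕ) t)ᵀ *ᵥ ((VD m φ n t)ᵀ *ᵥ v) = 0 := fun j => by
      rw [Matrix.mulVec_mulVec, ← Matrix.transpose_mul]
      exact hq j
    have hVTv := phiT_ker hsym hphi hV1 t _ hw
    have hTu : IsUnit (VD m φ n t)ᵀ := by
      rw [Matrix.isUnit_iff_isUnit_det, Matrix.det_transpose]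
      exact (Matrix.isUnit_iff_isUnit_det _).1 (hV1 t)
    exact hv0 (mulVec_eq_zero_of_unit hTu hVTv)
  have haeq : ∀ t, aD m φ n t = -(T t * (S t)⁻¹) := by
    intro t
    have hdV := (Matrix.isUnit_iff_isUnit_det _).1 (hV1 t)
    have hdS := (Matrix.isUnit_iff_isUnit_det _).1 (hSu t)
    have hV1eq : VD m φ (n + 1) t = -(aD m φ n t) * VD m φ n t := by
      rw [aD, neg_neg, Matrix.nonsing_inv_mul_cancel_right _ _ hdV]
    have hTS : T t = -(aD m φ n t * S t) := by
      rw [hTdef, hSdef]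
      simp only [hGV]
      rw [Matrix.mul_sum, ← Finset.sum_neg_distrib]
      apply Finset.sum_congr rfl
      intro j _
      rw [hV1eq]
      simp only [neg_mul, mul_assoc, neg_neg]
    rw [hTS, neg_mul, Matrix.mul_nonsing_inv_cancel_right _ _ hdS, neg_neg]
  have hfin : MDiff (fun t => -(T t * (S t)⁻¹)) := (hTd.mul (hSd.matrix_inv hSu)).neg
  intro t i j
  exact DifferentiableAt.congr_of_eventuallyEq (hfin t i j)
    (Filter.Eventually.of_forall fun s => by simp only [haeq s])

end Main2

section Main3

variable {p : ℕ} {m : ℕ → ℕ → ℝ → Mp p} {φ : ℕ → ℝ → Mp p} {n : ℕ}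

theorem key_rel (hderiv : ∀ i j t, HasDerivAt (m i j) (m (i + 1) j t + m i (j + 1) t) t)
    (hphi : ∀ i j t, m (i + 1) j t + m i (j + 1) t = φ i t * φ j t)
    (hM : ∀ n t, IsUnit (blockM m n t))
    (hV1 : ∀ t, IsUnit (VD m φ n t)) (t : ℝ) (k : Fin n) :
    mder (xiD m (n + 1) k.castSucc) t + aD m φ n t * mder (xiD m n k) t
      = mder (xiD m (n + 1) (Fin.last n)) t * xiD m n k t := by
  have hdV : IsUnit (VD m φ n t).det := (Matrix.isUnit_iff_isUnit_det _).1 (hV1 t)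
  have hE : ∀ j : Fin n,
      ∑ i : Fin n, (mder (xiD m (n + 1) i.castSucc) t + aD m φ n t * mder (xiD m n i) t
        - mder (xiD m (n + 1) (Fin.last n)) t * xiD m n i t) * m (i : ℕ) (j : ℕ) t = 0 := by
    intro j
    have h1 := xi_deriv_rel hderiv hphi hM (n + 1) t j.castSucc
    rw [Fin.sum_univ_castSucc] at h1
    simp only [Fin.coe_castSucc, Fin.val_last] at h1
    have h1' : ∑ i : Fin n, mder (xiD m (n + 1) i.castSucc) t * m (i : ℕ) (j : ℕ) t
        = -(VD m φ (n + 1) t * φ (j : ℕ) t)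
          - mder (xiD m (n + 1) (Fin.last n)) t * m n (j : ℕ) t := eq_sub_of_add_eq h1
    have h2 := xi_deriv_rel hderiv hphi hM n t j
    have h3' : ∑ i : Fin n, xiD m n i t * m (i : ℕ) (j : ℕ) t = -(m n (j : ℕ) t) :=
      eq_neg_of_add_eq_zero_left (orth hM n t j)
    simp only [add_mul, sub_mul, Finset.sum_add_distrib, Finset.sum_sub_distrib, mul_assoc,
      ← Finset.mul_sum]
    rw [h1', h2, h3']
    have ha : aD m φ n t * -(VD m φ n t * φ (j : ℕ) t) = VD m φ (n + 1) t * φ (j : ℕ) t := by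
      rw [aD]
      simp only [neg_mul, mul_neg, neg_neg]
      rw [mul_assoc, ← mul_assoc (VD m φ n t)⁻¹, Matrix.nonsing_inv_mul _ hdV, one_mul]
    rw [ha]
    simp only [mul_neg]
    abel
  have := row_cancel hM n t _ hE k
  rw [sub_eq_zero] at this
  exact this

theorem stmt13' (hsym : ∀ i j t, m i j t = (m j i t)ᵀ)
    (hderiv : ∀ i j t, HasDerivAt (m i j) (m (i + 1) j t + m i (j + 1) t) t)
    (hphi : ∀ i j t, m (i + 1) j t + m i (j + 1) t = φ i t * φ j t)
    (hM : ∀ n t, IsUnit (blockM m n t))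
    (hV1 : ∀ t, IsUnit (VD m φ n t)) (hV2 : ∀ t, IsUnit (VD m φ (n + 1) t)) :
    ∀ (t x : ℝ),
      HasDerivAt (fun s => Ppol m (n + 1) s x + aD m φ n s * Ppol m n s x)
        (deriv (fun s => xiD m (n + 1) ⟨n, Nat.lt_succ_self n⟩ s + aD m φ n s) t
          * Ppol m n t x) t := by
  intro t x
  have hmdaD : MDiff (aD m φ n) := mdiff_aD hsym hderiv hphi hM hV1
  have ha : HasDerivAt (aD m φ n) (mder (aD m φ n) t) t := hmdaD.hasDerivAt t
  have hP : ∀ N : ℕ, HasDerivAt (fun s => Ppol m N s x)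
      (∑ i : Fin N, x ^ (i : ℕ) • mder (xiD m N i) t) t := by
    intro N
    have h2 : HasDerivAt (fun s => ∑ i : Fin N, x ^ (i : ℕ) • xiD m N i s)
        (∑ i : Fin N, x ^ (i : ℕ) • mder (xiD m N i) t) t :=
      HasDerivAt.fun_sum fun i _ =>
        HasDerivAt.const_smul (x ^ (i : ℕ)) ((mdiff_xi hderiv hM N i).hasDerivAt t)
    have h := (hasDerivAt_const t (x ^ N • (1 : Mp p))).fun_add h2
    simp only [zero_add] at h
    exact h
  have hP0 : HasDerivAt (fun s => Ppol m n s x)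
      (∑ i : Fin n, x ^ (i : ℕ) • mder (xiD m n i) t) t := hP n
  have hP1 : HasDerivAt (fun s => Ppol m (n + 1) s x)
      (∑ i : Fin (n + 1), x ^ (i : ℕ) • mder (xiD m (n + 1) i) t) t := hP (n + 1)
  have htot := hP1.add (ha.matrix_mul hP0)
  have hfd : HasDerivAt (fun s => xiD m (n + 1) (Fin.last n) s + aD m φ n s)
      (mder (xiD m (n + 1) (Fin.last n)) t + mder (aD m φ n) t) t :=
    ((mdiff_xi hderiv hM (n + 1) (Fin.last n)).hasDerivAt t).add ha
  show HasDerivAt (fun s => Ppol m (n + 1) s x + aD m φ n s * Ppol m n s x)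
    (deriv (fun s => xiD m (n + 1) (Fin.last n) s + aD m φ n s) t * Ppol m n t x) t
  erw [hfd.deriv]
  have hval : (∑ i : Fin (n + 1), x ^ (i : ℕ) • mder (xiD m (n + 1) i) t)
      + (mder (aD m φ n) t * Ppol m n t x
        + aD m φ n t * ∑ i : Fin n, x ^ (i : ℕ) • mder (xiD m n i) t)
      = (mder (xiD m (n + 1) (Fin.last n)) t + mder (aD m φ n) t) * Ppol m n t x := by
    rw [Fin.sum_univ_castSucc]
    simp only [Fin.coe_castSucc, Fin.val_last]
    rw [add_mul]
    have hAP : mder (xiD m (n + 1) (Fin.last n)) t * Ppol m n t x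
        = x ^ n • mder (xiD m (n + 1) (Fin.last n)) t
          + ∑ i : Fin n, x ^ (i : ℕ) • (mder (xiD m (n + 1) (Fin.last n)) t * xiD m n i t) := by
      rw [Ppol, mul_add, Matrix.mul_sum]
      simp only [mul_smul_comm, mul_one]
    have hsum : aD m φ n t * ∑ i : Fin n, x ^ (i : ℕ) • mder (xiD m n i) t
        = ∑ i : Fin n, x ^ (i : ℕ) • (aD m φ n t * mder (xiD m n i) t) := by
      rw [Matrix.mul_sum]
      simp only [mul_smul_comm]
    rw [hAP, hsum]
    have hc : (∑ i : Fin n, x ^ (i : ℕ) • mder (xiD m (n + 1) i.castSucc) t)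
        + ∑ i : Fin n, x ^ (i : ℕ) • (aD m φ n t * mder (xiD m n i) t)
        = ∑ i : Fin n, x ^ (i : ℕ) • (mder (xiD m (n + 1) (Fin.last n)) t * xiD m n i t) := by
      rw [← Finset.sum_add_distrib]
      exact Finset.sum_congr rfl fun i _ => by
        rw [← smul_add, key_rel hderiv hphi hM hV1 t i]
    rw [← hc]
    abel
  rw [← hval]
  exact htot

end Main3

/-- Fix `n ≥ 0` and assume `V_n(t)` and `V_{n+1}(t)` are invertible for all `t`, with
`a_n = −V_{n+1} V_n⁻¹`.  Then for all `t ∈ ℝ` and all `x ∈ ℝ`,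
`∂_t (P_{n+1}(t,x) + a_n(t) P_n(t,x)) = (∂_t (ξ_{n+1,n} + a_n))(t) · P_n(t,x)`. -/
theorem stmt13 {p : ℕ} (hp : 1 ≤ p) (m : ℕ → ℕ → ℝ → Mp p) (φ : ℕ → ℝ → Mp p)
    (hsym : ∀ i j t, m i j t = (m j i t)ᵀ)
    (hderiv : ∀ i j t, HasDerivAt (m i j) (m (i + 1) j t + m i (j + 1) t) t)
    (hphi : ∀ i j t, m (i + 1) j t + m i (j + 1) t = φ i t * φ j t)
    (hM : ∀ n t, IsUnit (blockM m n t))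
    (n : ℕ)
    (hV1 : ∀ t, IsUnit (VD m φ n t)) (hV2 : ∀ t, IsUnit (VD m φ (n + 1) t)) :
    ∀ (t x : ℝ),
      HasDerivAt (fun s => Ppol m (n + 1) s x + aD m φ n s * Ppol m n s x)
        (deriv (fun s => xiD m (n + 1) ⟨n, Nat.lt_succ_self n⟩ s + aD m φ n s) t
          * Ppol m n t x) t := by
  exact stmt13' hsym hderiv hphi hM hV1 hV2
end
end

section
/- (Noncommutative C-Toda lattice.) Fix n ≥ 1 and assume that for all t the matrices V_n(t), V_{n+1}(t) and H_n(t) are invertible, with a_n = −V_{n+1} V_n^{-1}. Then the quantities a_n, H_n, ξ_{n,n−1}, ξ_{n+1,n} satisfy, for all t ∈ ℝ: (i) a_n · ∂_t H_n = (∂_t ξ_{n+1,n}) · H_n; (ii) ∂_t H_{n+1} = a_n · H_n · ∂_t (ξ_{n+1,n}^T); (iii) ∂_t H_n = (ξ_{n,n−1} − ξ_{n+1,n}) H_n + H_n (ξ_{n,n−1} − ξ_{n+1,n})^T. -/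
open Matrix

attribute [local instance] Matrix.normedAddCommGroup Matrix.normedSpace

noncomputable section

section helpers
variable {I J K : Type*} [Fintype I] [Fintype J] [Fintype K]

theorem hasDerivAt_mat {A : ℝ → Matrix I J ℝ} {A' : Matrix I J ℝ} {t : ℝ} :
    HasDerivAt A A' t ↔ ∀ i j, HasDerivAt (fun s => A s i j) (A' i j) t := by
  refine hasDerivAt_pi.trans ?_
  exact forall_congr' fun i => hasDerivAt_pi

theorem HasDerivAt.matmul {A : ℝ → Matrix I J ℝ} {B : ℝ → Matrix J K ℝ}
    {A' : Matrix I J ℝ} {B' : Matrix J K ℝ} {t : ℝ}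
    (hA : HasDerivAt A A' t) (hB : HasDerivAt B B' t) :
    HasDerivAt (fun s => A s * B s) (A' * B t + A t * B') t := by
  rw [hasDerivAt_mat] at hA hB ⊢
  intro i k
  simp only [Matrix.mul_apply, Matrix.add_apply]
  have := HasDerivAt.fun_sum (u := Finset.univ)
    (A := fun (j : J) s => A s i j * B s j k)
    (A' := fun j => A' i j * B t j k + A t i j * B' j k)
    (fun j _ => (hA i j).mul (hB j k))
  simpa [Finset.sum_add_distrib] using this

theorem HasDerivAt.matTranspose {A : ℝ → Matrix I J ℝ} {A' : Matrix I J ℝ} {t : ℝ}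
    (hA : HasDerivAt A A' t) :
    HasDerivAt (fun s => (A s)ᵀ) A'ᵀ t := by
  rw [hasDerivAt_mat] at hA ⊢
  intro i j
  exact hA j i

theorem differentiableAt_det [DecidableEq I] {A : ℝ → Matrix I I ℝ} {t : ℝ}
    (h : ∀ i j, DifferentiableAt ℝ (fun s => A s i j) t) :
    DifferentiableAt ℝ (fun s => (A s).det) t := by
  simp only [Matrix.det_apply]
  apply DifferentiableAt.fun_sum
  intro σ _
  have : DifferentiableAt ℝ (fun s => ∏ i, A s (σ i) i) t :=
    DifferentiableAt.fun_finsetProd (fun i _ => h (σ i) i)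
  simp only [Units.smul_def, zsmul_eq_mul]
  exact this.const_mul _

theorem differentiableAt_inv_entry [DecidableEq I] {A : ℝ → Matrix I I ℝ} {t : ℝ}
    (h : ∀ i j, DifferentiableAt ℝ (fun s => A s i j) t)
    (hdet : (A t).det ≠ 0) (i j : I) :
    DifferentiableAt ℝ (fun s => (A s)⁻¹ i j) t := by
  simp only [Matrix.inv_def, Matrix.smul_apply, Ring.inverse_eq_inv', smul_eq_mul,
    Matrix.adjugate_apply]
  apply DifferentiableAt.mul
  · exact (differentiableAt_det h).inv hdet
  · apply differentiableAt_det
    intro a b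
    rcases eq_or_ne a j with rfl | hne
    · simpa using differentiableAt_const _
    · simp only [Matrix.updateRow_ne hne]
      exact h a b

end helpers

section core
variable {p : ℕ} (m : ℕ → ℕ → ℝ → Mp p)

/-- `⟨P_N, x^k⟩` -/
def pairP (N k : ℕ) (t : ℝ) : Mp p :=
  m N k t + ∑ i : Fin N, xiD m N i t * m i k t

theorem pair_zero (hM : ∀ n t, IsUnit (blockM m n t)) {N k : ℕ} (hk : k < N) (t : ℝ) :
    pairP m N k t = 0 := by
  have hdet : IsUnit (blockM m N t).det := (Matrix.isUnit_iff_isUnit_det _).1 (hM N t)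
  have h := Matrix.nonsing_inv_mul_cancel_right (A := blockM m N t) (-(rowm m N t)) hdet
  ext a b
  have key : (∑ i : Fin N, xiD m N i t * m i k t) a b
      = ((-(rowm m N t)) * (blockM m N t)⁻¹ * blockM m N t) a (⟨k, hk⟩, b) := by
    calc (∑ i : Fin N, xiD m N i t * m i k t) a b
        = ∑ i : Fin N, ∑ c, xiD m N i t a c * m i k t c b := by
          simp [Matrix.sum_apply, Matrix.mul_apply]
      _ = ∑ y : Fin N × Fin p, ((-(rowm m N t)) * (blockM m N t)⁻¹) a y
            * blockM m N t y (⟨k, hk⟩, b) := by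
          rw [Fintype.sum_prod_type]; rfl
      _ = ((-(rowm m N t)) * (blockM m N t)⁻¹ * blockM m N t) a (⟨k, hk⟩, b) :=
          (Matrix.mul_apply).symm
  have h2 : ((-(rowm m N t)) * (blockM m N t)⁻¹ * blockM m N t) a (⟨k, hk⟩, b)
      = -(m N k t a b) := by rw [h]; rfl
  simp only [pairP, Matrix.add_apply, Matrix.zero_apply, key, h2]
  ring

end core

section core2
variable {p : ℕ} (m : ℕ → ℕ → ℝ → Mp p)

theorem pairT (hsym : ∀ i j t, m i j t = (m j i t)ᵀ) (N k : ℕ) (t : ℝ) :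
    (pairP m N k t)ᵀ = m k N t + ∑ j : Fin N, m k j t * (xiD m N j t)ᵀ := by
  simp only [pairP, Matrix.transpose_add, Matrix.transpose_sum, Matrix.transpose_mul]
  congr 1
  · exact (hsym k N t).symm
  · exact Finset.sum_congr rfl fun j _ => by rw [← hsym]

theorem H_pair (N : ℕ) (t : ℝ) : HmatD m N t = pairP m N N t := rfl

theorem H_symm (hsym : ∀ i j t, m i j t = (m j i t)ᵀ) (hM : ∀ n t, IsUnit (blockM m n t))
    (N : ℕ) (t : ℝ) : (HmatD m N t)ᵀ = HmatD m N t := by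
  have e1 : ∀ j : Fin N, m N (j : ℕ) t = -∑ i : Fin N, xiD m N i t * m i j t := by
    intro j
    have h0 := pair_zero m hM j.isLt t
    simp only [pairP] at h0
    exact eq_neg_of_add_eq_zero_left h0
  have e2 : ∀ i : Fin N, m (i : ℕ) N t = -∑ j : Fin N, m i j t * (xiD m N j t)ᵀ := by
    intro i
    have h0 := pair_zero m hM i.isLt t
    have h1 := pairT m hsym N i t
    rw [h0, Matrix.transpose_zero] at h1
    exact eq_neg_of_add_eq_zero_left h1.symm
  have L : ∑ j : Fin N, m N (j : ℕ) t * (xiD m N j t)ᵀ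
      = -∑ j : Fin N, ∑ i : Fin N, xiD m N i t * m i j t * (xiD m N j t)ᵀ := by
    rw [← Finset.sum_neg_distrib]
    apply Finset.sum_congr rfl
    intro j _
    rw [e1 j, neg_mul, Finset.sum_mul]
  have R : ∑ i : Fin N, xiD m N i t * m i N t
      = -∑ j : Fin N, ∑ i : Fin N, xiD m N i t * m i j t * (xiD m N j t)ᵀ := by
    calc ∑ i : Fin N, xiD m N i t * m i N t
        = ∑ i : Fin N, -∑ j : Fin N, xiD m N i t * (m i j t * (xiD m N j t)ᵀ) := by
          apply Finset.sum_congr rfl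
          intro i _
          rw [e2 i, mul_neg, Finset.mul_sum]
      _ = -∑ j : Fin N, ∑ i : Fin N, xiD m N i t * m i j t * (xiD m N j t)ᵀ := by
          rw [Finset.sum_neg_distrib, Finset.sum_comm]
          simp only [mul_assoc]
  rw [H_pair, pairT m hsym, L]
  simp only [pairP, R]

theorem m_entry_diff (hderiv : ∀ i j t, HasDerivAt (m i j) (m (i + 1) j t + m i (j + 1) t) t)
    (i j : ℕ) (t : ℝ) (a b : Fin p) :
    DifferentiableAt ℝ (fun s => m i j s a b) t :=
  ((hasDerivAt_mat).1 (hderiv i j t) a b).differentiableAt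

set_option maxHeartbeats 2000000 in
theorem xiD_diff (hderiv : ∀ i j t, HasDerivAt (m i j) (m (i + 1) j t + m i (j + 1) t) t)
    (hM : ∀ n t, IsUnit (blockM m n t)) (N : ℕ) (i : Fin N) (t : ℝ) :
    DifferentiableAt ℝ (xiD m N i) t := by
  have hdet : (blockM m N t).det ≠ 0 :=
    ((Matrix.isUnit_iff_isUnit_det _).1 (hM N t)).ne_zero
  refine differentiableAt_pi.2 ?_; intro a
  refine differentiableAt_pi.2 ?_; intro b
  have hrw : (fun s => xiD m N i s a b)
      = fun s => ∑ y : Fin N × Fin p, (-(rowm m N s)) a y * (blockM m N s)⁻¹ y (i, b) := by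
    funext s; simp [xiD, Matrix.mul_apply]
  rw [hrw]
  apply DifferentiableAt.fun_sum
  intro y _
  apply DifferentiableAt.mul
  · have hrw2 : (fun s => (-(rowm m N s)) a y) = fun s => -(m N (y.1 : ℕ) s a y.2) := rfl
    rw [hrw2]
    exact (m_entry_diff m hderiv N y.1 t a y.2).neg
  · exact differentiableAt_inv_entry
      (fun k l => m_entry_diff m hderiv k.1 l.1 t k.2 l.2) hdet y (i, b)

/-- `ξ'_{N,i}(t)` -/
def xdD (N : ℕ) (i : Fin N) (t : ℝ) : Mp p := deriv (xiD m N i) t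

theorem hasDerivAt_xi (hderiv : ∀ i j t, HasDerivAt (m i j) (m (i + 1) j t + m i (j + 1) t) t)
    (hM : ∀ n t, IsUnit (blockM m n t)) (N : ℕ) (i : Fin N) (t : ℝ) :
    HasDerivAt (xiD m N i) (xdD m N i t) t :=
  (xiD_diff m hderiv hM N i t).hasDerivAt

def dmD (i j : ℕ) (t : ℝ) : Mp p := m (i + 1) j t + m i (j + 1) t

def pdD (N k : ℕ) (t : ℝ) : Mp p :=
  dmD m N k t + ∑ i : Fin N, (xdD m N i t * m i k t + xiD m N i t * dmD m i k t)

set_option maxHeartbeats 1000000 in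
theorem hasDerivAt_pair (hderiv : ∀ i j t, HasDerivAt (m i j) (m (i + 1) j t + m i (j + 1) t) t)
    (hM : ∀ n t, IsUnit (blockM m n t)) (N k : ℕ) (t : ℝ) :
    HasDerivAt (fun s => pairP m N k s) (pdD m N k t) t := by
  have h1 : HasDerivAt (fun s => ∑ i : Fin N, xiD m N i s * m i k s)
      (∑ i : Fin N, (xdD m N i t * m i k t + xiD m N i t * dmD m i k t)) t := by
    apply HasDerivAt.fun_sum
    intro i _
    exact (hasDerivAt_xi m hderiv hM N i t).matmul (hderiv i k t)
  exact (hderiv N k t).add h1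

end core2

section core3
variable {p : ℕ} (m : ℕ → ℕ → ℝ → Mp p) (φ : ℕ → ℝ → Mp p)

/-- `W_N` -/
def WD (N : ℕ) (t : ℝ) : Mp p := φ N t + ∑ j : Fin N, φ j t * (xiD m N j t)ᵀ

/-- Leibniz derivative of `⟨P_N, P_N⟩`. -/
def DD (N : ℕ) (t : ℝ) : Mp p :=
  pdD m N N t + ∑ j : Fin N, pdD m N (j : ℕ) t * (xiD m N j t)ᵀ

theorem swap_mul {a b : ℕ} (f : Fin a → Mp p) (g : Fin a → Fin b → Mp p) (h : Fin b → Mp p) :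
    ∑ j : Fin b, (∑ i : Fin a, f i * g i j) * h j
      = ∑ i : Fin a, f i * (∑ j : Fin b, g i j * h j) := by
  simp only [Finset.sum_mul, Finset.mul_sum, mul_assoc]
  exact Finset.sum_comm

theorem pd_split (N k : ℕ) (t : ℝ) :
    pdD m N k t = (m (N + 1) k t + ∑ i : Fin N, xiD m N i t * m ((i : ℕ) + 1) k t)
      + pairP m N (k + 1) t + ∑ i : Fin N, xdD m N i t * m (i : ℕ) k t := by
  simp only [pdD, dmD, pairP, Finset.sum_add_distrib, mul_add]
  abel

theorem pd_phi (hphi : ∀ i j t, m (i + 1) j t + m i (j + 1) t = φ i t * φ j t)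
    (N k : ℕ) (t : ℝ) :
    pdD m N k t = VD m φ N t * φ k t + ∑ i : Fin N, xdD m N i t * m (i : ℕ) k t := by
  simp only [pdD, dmD, VD, hphi, add_mul, Finset.sum_mul, Finset.sum_add_distrib, mul_assoc]
  abel

theorem hasDerivAt_H (hderiv : ∀ i j t, HasDerivAt (m i j) (m (i + 1) j t + m i (j + 1) t) t)
    (hM : ∀ n t, IsUnit (blockM m n t)) (N : ℕ) (t : ℝ) :
    HasDerivAt (HmatD m N) (DD m N t) t := by
  have hfun : HmatD m N = fun s => pairP m N N s
      + ∑ j : Fin N, pairP m N (j : ℕ) s * (xiD m N j s)ᵀ := by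
    funext s
    rw [H_pair]
    have hz : ∑ j : Fin N, pairP m N (j : ℕ) s * (xiD m N j s)ᵀ = 0 :=
      Finset.sum_eq_zero fun j _ => by rw [pair_zero m hM j.isLt s, zero_mul]
    rw [hz, add_zero]
  rw [hfun]
  have main : HasDerivAt (fun s => pairP m N N s
        + ∑ j : Fin N, pairP m N (j : ℕ) s * (xiD m N j s)ᵀ)
      (pdD m N N t + ∑ j : Fin N, (pdD m N (j : ℕ) t * (xiD m N j t)ᵀ
        + pairP m N (j : ℕ) t * (xdD m N j t)ᵀ)) t := by
    apply (hasDerivAt_pair m hderiv hM N N t).add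
    apply HasDerivAt.fun_sum
    intro j _
    exact (hasDerivAt_pair m hderiv hM N (j : ℕ) t).matmul
      ((hasDerivAt_xi m hderiv hM N j t).matTranspose)
  have hval : pdD m N N t + ∑ j : Fin N, (pdD m N (j : ℕ) t * (xiD m N j t)ᵀ
        + pairP m N (j : ℕ) t * (xdD m N j t)ᵀ) = DD m N t := by
    unfold DD
    congr 1
    apply Finset.sum_congr rfl
    intro j _
    rw [pair_zero m hM j.isLt t, zero_mul, add_zero]
  rwa [hval] at main

theorem bracket_sum (hsym : ∀ i j t, m i j t = (m j i t)ᵀ)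
    (K M : ℕ) (t : ℝ) (F : Fin K → Mp p) :
    (∑ i : Fin K, F i * m (i : ℕ) M t)
      + ∑ j : Fin M, (∑ i : Fin K, F i * m (i : ℕ) (j : ℕ) t) * (xiD m M j t)ᵀ
      = ∑ i : Fin K, F i * (pairP m M (i : ℕ) t)ᵀ := by
  rw [swap_mul, ← Finset.sum_add_distrib]
  apply Finset.sum_congr rfl
  intro i _
  rw [← mul_add, pairT m hsym M (i : ℕ) t]

theorem sum_pair_last (hM : ∀ n t, IsUnit (blockM m n t)) (N : ℕ) (t : ℝ)
    (F : Fin (N + 1) → Mp p) :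
    ∑ j : Fin (N + 1), pairP m N (j : ℕ) t * F j = pairP m N N t * F (Fin.last N) := by
  rw [Finset.sum_eq_single (Fin.last N)]
  · rw [Fin.val_last]
  · intro b _ hb
    have hbv : (b : ℕ) < N := by
      have := b.isLt
      have : (b : ℕ) ≠ N := fun h => hb (Fin.ext (by rw [h, Fin.val_last]))
      omega
    rw [pair_zero m hM hbv t, zero_mul]
  · intro h; exact absurd (Finset.mem_univ _) h

theorem sum_last_pairT (hM : ∀ n t, IsUnit (blockM m n t)) (N : ℕ) (t : ℝ)
    (F : Fin (N + 1) → Mp p) :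
    ∑ i : Fin (N + 1), F i * (pairP m N (i : ℕ) t)ᵀ
      = F (Fin.last N) * (pairP m N N t)ᵀ := by
  rw [Finset.sum_eq_single (Fin.last N)]
  · rw [Fin.val_last]
  · intro b _ hb
    have hbv : (b : ℕ) < N := by
      have := b.isLt
      have : (b : ℕ) ≠ N := fun h => hb (Fin.ext (by rw [h, Fin.val_last]))
      omega
    rw [pair_zero m hM hbv t, Matrix.transpose_zero, mul_zero]
  · intro h; exact absurd (Finset.mem_univ _) h

theorem sum_pair_shift (hM : ∀ n t, IsUnit (blockM m n t)) {N : ℕ} (hN : 1 ≤ N) (t : ℝ)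
    (F : Fin N → Mp p) :
    ∑ j : Fin N, pairP m N ((j : ℕ) + 1) t * F j
      = pairP m N N t * F ⟨N - 1, by omega⟩ := by
  rw [Finset.sum_eq_single (⟨N - 1, by omega⟩ : Fin N)]
  · have : (N - 1) + 1 = N := by omega
    rw [this]
  · intro b _ hb
    have hbv : (b : ℕ) + 1 < N := by
      have h1 := b.isLt
      have h2 : (b : ℕ) ≠ N - 1 := fun h => hb (Fin.ext h)
      omega
    rw [pair_zero m hM hbv t, zero_mul]
  · intro h; exact absurd (Finset.mem_univ _) h

theorem sum_shift_pairT (hM : ∀ n t, IsUnit (blockM m n t)) {N : ℕ} (hN : 1 ≤ N) (t : ℝ)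
    (F : Fin N → Mp p) :
    ∑ i : Fin N, F i * (pairP m N ((i : ℕ) + 1) t)ᵀ
      = F ⟨N - 1, by omega⟩ * (pairP m N N t)ᵀ := by
  rw [Finset.sum_eq_single (⟨N - 1, by omega⟩ : Fin N)]
  · have : (N - 1) + 1 = N := by omega
    rw [this]
  · intro b _ hb
    have hbv : (b : ℕ) + 1 < N := by
      have h1 := b.isLt
      have h2 : (b : ℕ) ≠ N - 1 := fun h => hb (Fin.ext h)
      omega
    rw [pair_zero m hM hbv t, Matrix.transpose_zero, mul_zero]
  · intro h; exact absurd (Finset.mem_univ _) h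

theorem DD_phi (hsym : ∀ i j t, m i j t = (m j i t)ᵀ)
    (hphi : ∀ i j t, m (i + 1) j t + m i (j + 1) t = φ i t * φ j t)
    (hM : ∀ n t, IsUnit (blockM m n t)) (N : ℕ) (t : ℝ) :
    DD m N t = VD m φ N t * WD m φ N t := by
  calc DD m N t
      = (VD m φ N t * φ N t + ∑ i : Fin N, xdD m N i t * m (i : ℕ) N t)
        + ∑ j : Fin N, (VD m φ N t * φ (j : ℕ) t
            + ∑ i : Fin N, xdD m N i t * m (i : ℕ) (j : ℕ) t) * (xiD m N j t)ᵀ := by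
        simp only [DD, pd_phi m φ hphi]
    _ = (VD m φ N t * φ N t + ∑ j : Fin N, VD m φ N t * φ (j : ℕ) t * (xiD m N j t)ᵀ)
        + ((∑ i : Fin N, xdD m N i t * m (i : ℕ) N t)
          + ∑ j : Fin N, (∑ i : Fin N, xdD m N i t * m (i : ℕ) (j : ℕ) t) * (xiD m N j t)ᵀ) := by
        simp only [add_mul, Finset.sum_add_distrib]
        abel
    _ = VD m φ N t * WD m φ N t := by
        rw [bracket_sum m hsym N N t]
        have hz : ∑ i : Fin N, xdD m N i t * (pairP m N (i : ℕ) t)ᵀ = 0 :=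
          Finset.sum_eq_zero fun i _ => by
            rw [pair_zero m hM i.isLt t, Matrix.transpose_zero, mul_zero]
        rw [hz, add_zero, WD, mul_add, Finset.mul_sum]
        simp only [mul_assoc]

theorem Cross0 (hsym : ∀ i j t, m i j t = (m j i t)ᵀ)
    (hM : ∀ n t, IsUnit (blockM m n t)) (N : ℕ) (t : ℝ) :
    pairP m N (N + 1) t
      + ∑ j : Fin (N + 1), pairP m N (j : ℕ) t * (xiD m (N + 1) j t)ᵀ = 0 := by
  have hT : ∀ k, k < N + 1 →
      m k (N + 1) t + ∑ j : Fin (N + 1), m k (j : ℕ) t * (xiD m (N + 1) j t)ᵀ = 0 := by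
    intro k hk
    rw [← pairT m hsym, pair_zero m hM hk, Matrix.transpose_zero]
  calc pairP m N (N + 1) t
        + ∑ j : Fin (N + 1), pairP m N (j : ℕ) t * (xiD m (N + 1) j t)ᵀ
      = (m N (N + 1) t + ∑ j : Fin (N + 1), m N (j : ℕ) t * (xiD m (N + 1) j t)ᵀ)
        + ∑ i : Fin N, xiD m N i t *
            (m (i : ℕ) (N + 1) t
              + ∑ j : Fin (N + 1), m (i : ℕ) (j : ℕ) t * (xiD m (N + 1) j t)ᵀ) := by
        simp only [pairP, add_mul, Finset.sum_add_distrib, mul_add]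
        rw [swap_mul]
        abel
    _ = 0 := by
        rw [hT N (by omega), Finset.sum_eq_zero, add_zero]
        intro i _
        rw [hT (i : ℕ) (by omega), mul_zero]

theorem Gt_lemma (hsym : ∀ i j t, m i j t = (m j i t)ᵀ)
    (hM : ∀ n t, IsUnit (blockM m n t)) (N : ℕ) (t : ℝ) :
    pairP m N (N + 1) t = -(HmatD m N t * (xiD m (N + 1) (Fin.last N) t)ᵀ) := by
  have h := Cross0 m hsym hM N t
  rw [sum_pair_last m hM N t, ← H_pair] at h
  exact eq_neg_of_add_eq_zero_left h

end core3

section core4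
variable {p : ℕ} (m : ℕ → ℕ → ℝ → Mp p) (φ : ℕ → ℝ → Mp p)

theorem DD_shift (hsym : ∀ i j t, m i j t = (m j i t)ᵀ)
    (hM : ∀ n t, IsUnit (blockM m n t)) {N : ℕ} (hN : 1 ≤ N) (t : ℝ) :
    DD m N t = (xiD m N ⟨N - 1, by omega⟩ t - xiD m (N + 1) (Fin.last N) t) * HmatD m N t
      + HmatD m N t * (xiD m N ⟨N - 1, by omega⟩ t - xiD m (N + 1) (Fin.last N) t)ᵀ := by
  have hbr := bracket_sum m hsym N N t (fun i => xdD m N i t)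
  have hz : ∑ i : Fin N, xdD m N i t * (pairP m N (i : ℕ) t)ᵀ = 0 :=
    Finset.sum_eq_zero fun i _ => by
      rw [pair_zero m hM i.isLt t, Matrix.transpose_zero, mul_zero]
  calc DD m N t
      = ((m (N + 1) N t + ∑ j : Fin N, m (N + 1) (j : ℕ) t * (xiD m N j t)ᵀ)
          + ∑ i : Fin N, xiD m N i t * (m ((i : ℕ) + 1) N t
              + ∑ j : Fin N, m ((i : ℕ) + 1) (j : ℕ) t * (xiD m N j t)ᵀ))
        + (pairP m N (N + 1) t + ∑ j : Fin N, pairP m N ((j : ℕ) + 1) t * (xiD m N j t)ᵀ)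
        + ((∑ i : Fin N, xdD m N i t * m (i : ℕ) N t)
          + ∑ j : Fin N, (∑ i : Fin N, xdD m N i t * m (i : ℕ) (j : ℕ) t) * (xiD m N j t)ᵀ) := by
        simp only [DD, pd_split, add_mul, Finset.sum_add_distrib, mul_add]
        simp only [swap_mul]
        abel
    _ = ((pairP m N (N + 1) t)ᵀ + xiD m N ⟨N - 1, by omega⟩ t * (pairP m N N t)ᵀ)
        + (pairP m N (N + 1) t + pairP m N N t * (xiD m N ⟨N - 1, by omega⟩ t)ᵀ)
        + 0 := by
        rw [bracket_sum m hsym N N t (fun i => xdD m N i t), hz]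
        congr 1
        congr 1
        · congr 1
          · rw [pairT m hsym N (N + 1) t]
          · have : ∀ i : Fin N, m ((i : ℕ) + 1) N t
                + ∑ j : Fin N, m ((i : ℕ) + 1) (j : ℕ) t * (xiD m N j t)ᵀ
                = (pairP m N ((i : ℕ) + 1) t)ᵀ := fun i => (pairT m hsym N _ t).symm
            simp only [this]
            rw [sum_shift_pairT m hM hN t]
        · congr 1
          rw [sum_pair_shift m hM hN t]
    _ = (xiD m N ⟨N - 1, by omega⟩ t - xiD m (N + 1) (Fin.last N) t) * HmatD m N t
        + HmatD m N t * (xiD m N ⟨N - 1, by omega⟩ t - xiD m (N + 1) (Fin.last N) t)ᵀ := by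
        rw [Gt_lemma m hsym hM N t, ← H_pair]
        have hHs := H_symm m hsym hM N t
        rw [Matrix.transpose_neg, Matrix.transpose_mul, Matrix.transpose_transpose, hHs]
        rw [sub_mul, Matrix.transpose_sub, mul_sub]
        abel

theorem crossD (hsym : ∀ i j t, m i j t = (m j i t)ᵀ)
    (hderiv : ∀ i j t, HasDerivAt (m i j) (m (i + 1) j t + m i (j + 1) t) t)
    (hphi : ∀ i j t, m (i + 1) j t + m i (j + 1) t = φ i t * φ j t)
    (hM : ∀ n t, IsUnit (blockM m n t)) (N : ℕ) (t : ℝ) :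
    VD m φ N t * WD m φ (N + 1) t
      + HmatD m N t * (xdD m (N + 1) (Fin.last N) t)ᵀ = 0 := by
  have hF : (fun s => pairP m N (N + 1) s
      + ∑ j : Fin (N + 1), pairP m N (j : ℕ) s * (xiD m (N + 1) j s)ᵀ)
      = fun _ => (0 : Mp p) := funext fun s => Cross0 m hsym hM N s
  have hD : HasDerivAt (fun s => pairP m N (N + 1) s
        + ∑ j : Fin (N + 1), pairP m N (j : ℕ) s * (xiD m (N + 1) j s)ᵀ)
      (pdD m N (N + 1) t + ∑ j : Fin (N + 1), (pdD m N (j : ℕ) t * (xiD m (N + 1) j t)ᵀ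
        + pairP m N (j : ℕ) t * (xdD m (N + 1) j t)ᵀ)) t := by
    apply (hasDerivAt_pair m hderiv hM N (N + 1) t).add
    apply HasDerivAt.fun_sum
    intro j _
    exact (hasDerivAt_pair m hderiv hM N (j : ℕ) t).matmul
      ((hasDerivAt_xi m hderiv hM (N + 1) j t).matTranspose)
  have hzero : HasDerivAt (fun s => pairP m N (N + 1) s
      + ∑ j : Fin (N + 1), pairP m N (j : ℕ) s * (xiD m (N + 1) j s)ᵀ) (0 : Mp p) t := by
    rw [hF]; exact hasDerivAt_const t 0
  have heq := hD.unique hzero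
  rw [← heq]
  -- now rearrange the Leibniz value into the claimed form
  calc VD m φ N t * WD m φ (N + 1) t + HmatD m N t * (xdD m (N + 1) (Fin.last N) t)ᵀ
      = (VD m φ N t * φ (N + 1) t
          + ∑ j : Fin (N + 1), VD m φ N t * φ (j : ℕ) t * (xiD m (N + 1) j t)ᵀ)
        + ((∑ i : Fin N, xdD m N i t * m (i : ℕ) (N + 1) t)
          + ∑ j : Fin (N + 1),
              (∑ i : Fin N, xdD m N i t * m (i : ℕ) (j : ℕ) t) * (xiD m (N + 1) j t)ᵀ)
        + ∑ j : Fin (N + 1), pairP m N (j : ℕ) t * (xdD m (N + 1) j t)ᵀ := by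
        rw [bracket_sum m hsym N (N + 1) t (fun i => xdD m N i t)]
        have hz : ∑ i : Fin N, xdD m N i t * (pairP m (N + 1) (i : ℕ) t)ᵀ = 0 :=
          Finset.sum_eq_zero fun i _ => by
            rw [pair_zero m hM (Nat.lt_succ_of_lt i.isLt) t, Matrix.transpose_zero, mul_zero]
        rw [hz, add_zero]
        rw [sum_pair_last m hM N t, ← H_pair]
        rw [WD, mul_add, Finset.mul_sum]
        simp only [mul_assoc]
    _ = pdD m N (N + 1) t + ∑ j : Fin (N + 1), (pdD m N (j : ℕ) t * (xiD m (N + 1) j t)ᵀ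
        + pairP m N (j : ℕ) t * (xdD m (N + 1) j t)ᵀ) := by
        simp only [pd_phi m φ hphi, add_mul, Finset.sum_add_distrib]
        abel

theorem crossD' (hsym : ∀ i j t, m i j t = (m j i t)ᵀ)
    (hderiv : ∀ i j t, HasDerivAt (m i j) (m (i + 1) j t + m i (j + 1) t) t)
    (hphi : ∀ i j t, m (i + 1) j t + m i (j + 1) t = φ i t * φ j t)
    (hM : ∀ n t, IsUnit (blockM m n t)) (N : ℕ) (t : ℝ) :
    VD m φ (N + 1) t * WD m φ N t
      + xdD m (N + 1) (Fin.last N) t * HmatD m N t = 0 := by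
  have hF : (fun s => pairP m (N + 1) N s
      + ∑ j : Fin N, pairP m (N + 1) (j : ℕ) s * (xiD m N j s)ᵀ)
      = fun _ => (0 : Mp p) := by
    funext s
    rw [pair_zero m hM (by omega) s, Finset.sum_eq_zero, add_zero]
    intro j _
    rw [pair_zero m hM (Nat.lt_succ_of_lt j.isLt) s, zero_mul]
  have hD : HasDerivAt (fun s => pairP m (N + 1) N s
        + ∑ j : Fin N, pairP m (N + 1) (j : ℕ) s * (xiD m N j s)ᵀ)
      (pdD m (N + 1) N t + ∑ j : Fin N, (pdD m (N + 1) (j : ℕ) t * (xiD m N j t)ᵀ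
        + pairP m (N + 1) (j : ℕ) t * (xdD m N j t)ᵀ)) t := by
    apply (hasDerivAt_pair m hderiv hM (N + 1) N t).add
    apply HasDerivAt.fun_sum
    intro j _
    exact (hasDerivAt_pair m hderiv hM (N + 1) (j : ℕ) t).matmul
      ((hasDerivAt_xi m hderiv hM N j t).matTranspose)
  have hzero : HasDerivAt (fun s => pairP m (N + 1) N s
      + ∑ j : Fin N, pairP m (N + 1) (j : ℕ) s * (xiD m N j s)ᵀ) (0 : Mp p) t := by
    rw [hF]; exact hasDerivAt_const t 0
  have heq := hD.unique hzero
  rw [← heq]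
  calc VD m φ (N + 1) t * WD m φ N t + xdD m (N + 1) (Fin.last N) t * HmatD m N t
      = (VD m φ (N + 1) t * φ N t
          + ∑ j : Fin N, VD m φ (N + 1) t * φ (j : ℕ) t * (xiD m N j t)ᵀ)
        + ((∑ i : Fin (N + 1), xdD m (N + 1) i t * m (i : ℕ) N t)
          + ∑ j : Fin N,
              (∑ i : Fin (N + 1), xdD m (N + 1) i t * m (i : ℕ) (j : ℕ) t) * (xiD m N j t)ᵀ) := by
        rw [bracket_sum m hsym (N + 1) N t (fun i => xdD m (N + 1) i t)]
        rw [sum_last_pairT m hM N t]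
        rw [← H_pair]
        have hHs := H_symm m hsym hM N t
        rw [hHs]
        rw [WD, mul_add, Finset.mul_sum]
        simp only [mul_assoc]
        try abel
    _ = pdD m (N + 1) N t + ∑ j : Fin N, (pdD m (N + 1) (j : ℕ) t * (xiD m N j t)ᵀ
        + pairP m (N + 1) (j : ℕ) t * (xdD m N j t)ᵀ) := by
        have hz : ∑ j : Fin N, pairP m (N + 1) (j : ℕ) t * (xdD m N j t)ᵀ = 0 :=
          Finset.sum_eq_zero fun j _ => by
            rw [pair_zero m hM (Nat.lt_succ_of_lt j.isLt) t, zero_mul]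
        simp only [pd_phi m φ hphi, add_mul, Finset.sum_add_distrib, hz]
        try abel

end core4

/-- **Noncommutative C-Toda lattice.**  Fix `n ≥ 1` and assume that for all `t` the matrices
`V_n(t)`, `V_{n+1}(t)` and `H_n(t)` are invertible, with `a_n = −V_{n+1} V_n⁻¹`.  Then for
all `t ∈ ℝ`:
(i) `a_n ∂_t H_n = (∂_t ξ_{n+1,n}) H_n`;
(ii) `∂_t H_{n+1} = a_n H_n ∂_t (ξ_{n+1,n}ᵀ)`;
(iii) `∂_t H_n = (ξ_{n,n−1} − ξ_{n+1,n}) H_n + H_n (ξ_{n,n−1} − ξ_{n+1,n})ᵀ`. -/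
theorem stmt14 {p : ℕ} (hp : 1 ≤ p) (m : ℕ → ℕ → ℝ → Mp p) (φ : ℕ → ℝ → Mp p)
    (hsym : ∀ i j t, m i j t = (m j i t)ᵀ)
    (hderiv : ∀ i j t, HasDerivAt (m i j) (m (i + 1) j t + m i (j + 1) t) t)
    (hphi : ∀ i j t, m (i + 1) j t + m i (j + 1) t = φ i t * φ j t)
    (hM : ∀ n t, IsUnit (blockM m n t))
    (n : ℕ) (hn : 1 ≤ n)
    (hV1 : ∀ t, IsUnit (VD m φ n t)) (hV2 : ∀ t, IsUnit (VD m φ (n + 1) t))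
    (hH : ∀ t, IsUnit (HmatD m n t)) :
    ∀ t : ℝ,
      aD m φ n t * deriv (HmatD m n) t
          = deriv (xiD m (n + 1) ⟨n, by omega⟩) t * HmatD m n t ∧
      deriv (HmatD m (n + 1)) t
          = aD m φ n t * HmatD m n t * deriv (fun s => (xiD m (n + 1) ⟨n, by omega⟩ s)ᵀ) t ∧
      deriv (HmatD m n) t
          = (xiD m n ⟨n - 1, by omega⟩ t - xiD m (n + 1) ⟨n, by omega⟩ t) * HmatD m n t
            + HmatD m n t * (xiD m n ⟨n - 1, by omega⟩ t - xiD m (n + 1) ⟨n, by omega⟩ t)ᵀ := by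
  intro t
  have hdetV1 : IsUnit (VD m φ n t).det := (Matrix.isUnit_iff_isUnit_det _).1 (hV1 t)
  have haV : aD m φ n t * VD m φ n t = -(VD m φ (n + 1) t) := by
    rw [aD, neg_mul, Matrix.nonsing_inv_mul_cancel_right _ _ hdetV1]
  have hH1 : deriv (HmatD m n) t = VD m φ n t * WD m φ n t := by
    have h := hasDerivAt_H m hderiv hM n t
    erw [h.deriv]; rw [DD_phi m φ hsym hphi hM]
  have hH2 : deriv (HmatD m (n + 1)) t = VD m φ (n + 1) t * WD m φ (n + 1) t := by
    have h := hasDerivAt_H m hderiv hM (n + 1) t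
    erw [h.deriv]; rw [DD_phi m φ hsym hphi hM]
  have hxd : deriv (xiD m (n + 1) ⟨n, by omega⟩) t = xdD m (n + 1) (Fin.last n) t := rfl
  have hxdT : deriv (fun s => (xiD m (n + 1) ⟨n, by omega⟩ s)ᵀ) t
      = (xdD m (n + 1) (Fin.last n) t)ᵀ :=
    ((hasDerivAt_xi m hderiv hM (n + 1) (Fin.last n) t).matTranspose).deriv
  have hc := crossD m φ hsym hderiv hphi hM n t
  have hc' := crossD' m φ hsym hderiv hphi hM n t
  refine ⟨?_, ?_, ?_⟩
  · rw [hH1, hxd]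
    have e1 : xdD m (n + 1) (Fin.last n) t * HmatD m n t
        = -(VD m φ (n + 1) t * WD m φ n t) := eq_neg_of_add_eq_zero_right hc'
    rw [e1, ← mul_assoc, haV, neg_mul]
  · rw [hH2, hxdT]
    have e2 : HmatD m n t * (xdD m (n + 1) (Fin.last n) t)ᵀ
        = -(VD m φ n t * WD m φ (n + 1) t) := eq_neg_of_add_eq_zero_right hc
    rw [mul_assoc, e2, mul_neg, ← mul_assoc, haV, neg_mul, neg_neg]
  · have h := hasDerivAt_H m hderiv hM n t
    erw [h.deriv]
    exact DD_shift m hsym hM hn t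
end
end
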